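/- arXiv:2410.16957 — 2 statements merged into one kernel-verified Lean document; each statement's English description precedes it below -/
import Mathlib

section
/- Let u ∈ C¹(B_1) and let α : B_1 → (0,1) be uniformly continuous with modulus of continuity γ_α satisfying lim as t→0⁺ of ln(t)·γ_α(t) = 0. Then [u]_{C^{1,α(·)}(B_1)} < ∞ (i.e. u ∈ C^{1,α(·)}(B_1)) if and only if there exists a constant C > 0, independent of x, such that for every x ∈ B_1 there is an affine function ℓ_x with sup over B_r(x) ∩ B_1 of |u − ℓ_x| ≤ C·r^{1+α(x)} for every r > 0. -/
open Metric Real Filter Set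
open scoped RealInnerProductSpace

noncomputable section

/-- Modulus of continuity of a real-valued function h on a set s. -/
def modulusOn {d : ℕ} (s : Set (EuclideanSpace ℝ (Fin d)))
    (h : EuclideanSpace ℝ (Fin d) → ℝ) (t : ℝ) : ℝ :=
  sSup {c | ∃ x ∈ s, ∃ y ∈ s, dist x y ≤ t ∧ c = |h x - h y|}

open Asymptotics


lemma aff_bound {d : ℕ} (D w : EuclideanSpace ℝ (Fin d)) (c M t : ℝ) (ht : 0 < t)
    (h : ∀ z ∈ ball w t, |c + ⟪D, z⟫| ≤ M) : t * ‖D‖ ≤ 2 * M := by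
  by_cases hD : D = 0
  · have h0 := h w (mem_ball_self ht)
    have : (0:ℝ) ≤ M := le_trans (abs_nonneg _) h0
    simp [hD]
    nlinarith
  · set e := ‖D‖⁻¹ • D with he
    have hDpos : 0 < ‖D‖ := norm_pos_iff.mpr hD
    have hne : ‖e‖ = 1 := by
      rw [he, norm_smul, norm_inv, norm_norm, inv_mul_cancel₀ (ne_of_gt hDpos)]
    have hmem : ∀ s : ℝ, |s| < t → w + s • e ∈ ball w t := by
      intro s hs
      rw [mem_ball_iff_norm]
      simp [norm_smul, hne, hs]
    have h1 := h _ (hmem (t/2) (by rw [abs_of_pos (by linarith)]; linarith))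
    have h2 := h _ (hmem (-(t/2)) (by rw [abs_neg, abs_of_pos (by linarith)]; linarith))
    have hinner : ∀ s : ℝ, ⟪D, w + s • e⟫ = ⟪D, w⟫ + s * ‖D‖ := by
      intro s
      rw [inner_add_right, inner_smul_right, he, inner_smul_right,
        real_inner_self_eq_norm_mul_norm]
      field_simp
    rw [hinner] at h1 h2
    rw [abs_le] at h1 h2
    nlinarith [h1.2, h2.1]


lemma fderiv_eq_of_affine_approx {d : ℕ} (u : EuclideanSpace ℝ (Fin d) → ℝ)
    (x : EuclideanSpace ℝ (Fin d)) (hx : x ∈ ball (0 : EuclideanSpace ℝ (Fin d)) 1)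
    (a : ℝ) (ha : 0 < a) (ha1 : a < 1) (C : ℝ) (hCpos : 0 < C)
    (b : ℝ) (A : EuclideanSpace ℝ (Fin d))
    (hap : ∀ r > (0 : ℝ), ∀ y ∈ ball x r ∩ ball (0 : EuclideanSpace ℝ (Fin d)) 1,
      |u y - (b + ⟪A, y⟫)| ≤ C * r ^ ((1 : ℝ) + a)) :
    fderiv ℝ u x = InnerProductSpace.toDual ℝ (EuclideanSpace ℝ (Fin d)) A := by
  have hder : HasFDerivAt u (InnerProductSpace.toDual ℝ (EuclideanSpace ℝ (Fin d)) A) x := by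
    rw [hasFDerivAt_iff_isLittleO_nhds_zero]
    have hmem : ∀ᶠ h : EuclideanSpace ℝ (Fin d) in nhds 0, x + h ∈ ball (0 : EuclideanSpace ℝ (Fin d)) 1 := by
      have ht : Tendsto (fun h : EuclideanSpace ℝ (Fin d) => x + h) (nhds 0) (nhds x) := by
        simpa using (continuous_add_left x).tendsto (0 : EuclideanSpace ℝ (Fin d))
      exact ht.eventually (isOpen_ball.eventually_mem hx)
    have h8 : ∀ᶠ h : EuclideanSpace ℝ (Fin d) in nhds 0,
        ‖u (x + h) - u x - (InnerProductSpace.toDual ℝ (EuclideanSpace ℝ (Fin d)) A) h‖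
          ≤ 8 * C * ‖h‖ ^ a * ‖h‖ := by
      filter_upwards [hmem] with h hmemh
      by_cases h0 : h = 0
      · simp [h0]
      · have hnpos : 0 < ‖h‖ := norm_pos_iff.mpr h0
        have hr : (0:ℝ) < 2 * ‖h‖ := by linarith
        have h1 := hap (2 * ‖h‖) hr (x + h)
          ⟨by rw [mem_ball_iff_norm]; simp; linarith, hmemh⟩
        have h2 := hap (2 * ‖h‖) hr x ⟨mem_ball_self hr, hx⟩
        have hkey : u (x + h) - u x -
            (InnerProductSpace.toDual ℝ (EuclideanSpace ℝ (Fin d)) A) h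
            = (u (x + h) - (b + ⟪A, x + h⟫)) - (u x - (b + ⟪A, x⟫)) := by
          rw [InnerProductSpace.toDual_apply_apply, inner_add_right]
          ring
        rw [Real.norm_eq_abs, hkey]
        have hb1 : (2 * ‖h‖) ^ ((1:ℝ) + a) ≤ 4 * (‖h‖ ^ a * ‖h‖) := by
          rw [Real.mul_rpow (by norm_num) (norm_nonneg _)]
          have e1 : (2:ℝ) ^ ((1:ℝ) + a) ≤ 4 := by
            calc (2:ℝ) ^ ((1:ℝ) + a) ≤ (2:ℝ) ^ ((2:ℕ):ℝ) :=
              Real.rpow_le_rpow_of_exponent_le one_le_two (by push_cast; linarith)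
            _ = 4 := by rw [Real.rpow_natCast]; norm_num
          have e2 : ‖h‖ ^ ((1:ℝ) + a) = ‖h‖ ^ a * ‖h‖ := by
            rw [add_comm, Real.rpow_add_one (ne_of_gt hnpos)]
          rw [e2]
          have e3 : (0:ℝ) ≤ ‖h‖ ^ a * ‖h‖ := by positivity
          nlinarith [Real.rpow_nonneg (le_of_lt (show (0:ℝ) < 2 by norm_num)) ((1:ℝ) + a)]
        calc |(u (x + h) - (b + ⟪A, x + h⟫)) - (u x - (b + ⟪A, x⟫))|
            ≤ |u (x + h) - (b + ⟪A, x + h⟫)| + |u x - (b + ⟪A, x⟫)| := abs_sub _ _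
          _ ≤ 2 * (C * (2 * ‖h‖) ^ ((1:ℝ) + a)) := by linarith
          _ ≤ 8 * C * ‖h‖ ^ a * ‖h‖ := by nlinarith
    have hlo : (fun h : EuclideanSpace ℝ (Fin d) => 8 * C * ‖h‖ ^ a * ‖h‖)
        =o[nhds 0] (fun h : EuclideanSpace ℝ (Fin d) => h) := by
      rw [← isLittleO_norm_right]
      have htend : Tendsto (fun h : EuclideanSpace ℝ (Fin d) => 8 * C * ‖h‖ ^ a)
          (nhds 0) (nhds 0) := by
        have hn : Tendsto (fun h : EuclideanSpace ℝ (Fin d) => ‖h‖) (nhds 0) (nhds 0) :=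
          tendsto_norm_zero
        have hrp : Tendsto (fun t : ℝ => t ^ a) (nhds 0) (nhds 0) := by
          have := Real.continuousAt_rpow_const 0 a (Or.inr ha.le)
          simpa [Real.zero_rpow (ne_of_gt ha)] using this.tendsto
        have := (hrp.comp hn).const_mul (8 * C)
        simpa using this
      have h1 : (fun h : EuclideanSpace ℝ (Fin d) => 8 * C * ‖h‖ ^ a)
          =o[nhds 0] (fun _ : EuclideanSpace ℝ (Fin d) => (1:ℝ)) :=
        (isLittleO_one_iff ℝ).mpr htend
      have h2 := h1.mul_isBigO (isBigO_refl (fun h : EuclideanSpace ℝ (Fin d) => ‖h‖) (nhds 0))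
      simpa using h2
    refine IsBigO.trans_isLittleO ?_ hlo
    rw [isBigO_iff]
    refine ⟨1, ?_⟩
    filter_upwards [h8] with h hh
    rw [one_mul]
    calc ‖u (x + h) - u x - (InnerProductSpace.toDual ℝ (EuclideanSpace ℝ (Fin d)) A) h‖
        ≤ 8 * C * ‖h‖ ^ a * ‖h‖ := hh
      _ ≤ ‖8 * C * ‖h‖ ^ a * ‖h‖‖ := le_abs_self _
  exact hder.fderiv


lemma forward_dir {d : ℕ} (u : EuclideanSpace ℝ (Fin d) → ℝ)
    (α : EuclideanSpace ℝ (Fin d) → ℝ)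
    (hu : ContDiffOn ℝ 1 u (ball (0 : EuclideanSpace ℝ (Fin d)) 1))
    (hα : ∀ x ∈ ball (0 : EuclideanSpace ℝ (Fin d)) 1, 0 < α x ∧ α x < 1)
    (C : ℝ)
    (hC : ∀ x ∈ ball (0 : EuclideanSpace ℝ (Fin d)) 1,
        ∀ y ∈ ball (0 : EuclideanSpace ℝ (Fin d)) 1, x ≠ y →
        ‖fderiv ℝ u x - fderiv ℝ u y‖ ≤ C * ‖x - y‖ ^ (α x)) :
    (∃ C > (0 : ℝ), ∀ x ∈ ball (0 : EuclideanSpace ℝ (Fin d)) 1,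
        ∃ (b : ℝ) (A : EuclideanSpace ℝ (Fin d)), ∀ r > (0 : ℝ),
          ∀ y ∈ ball x r ∩ ball (0 : EuclideanSpace ℝ (Fin d)) 1,
            |u y - (b + ⟪A, y⟫)| ≤ C * r ^ ((1 : ℝ) + α x)) := by
  set C0 : ℝ := max C 0 with hC0
  have hC00 : 0 ≤ C0 := le_max_right _ _
  have hCC0 : C ≤ C0 := le_max_left _ _
  refine ⟨C0 + 1, by positivity, fun x hx => ?_⟩
  have hαx := hα x hx
  refine ⟨u x - fderiv ℝ u x x,
    (InnerProductSpace.toDual ℝ (EuclideanSpace ℝ (Fin d))).symm (fderiv ℝ u x),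
    fun r hr y hy => ?_⟩
  obtain ⟨hyr, hy1⟩ := hy
  have hrpow : (0:ℝ) ≤ r ^ ((1:ℝ) + α x) := Real.rpow_nonneg (le_of_lt hr) _
  rw [InnerProductSpace.toDual_symm_apply]
  by_cases hxy : y = x
  · subst hxy
    simp
    positivity
  · -- MVT estimate
    have hyx : ‖y - x‖ ≠ 0 := by
      simpa [sub_eq_zero] using hxy
    have hyxpos : 0 < ‖y - x‖ := lt_of_le_of_ne (norm_nonneg _) (Ne.symm hyx)
    have hdiff : DifferentiableOn ℝ u (ball (0 : EuclideanSpace ℝ (Fin d)) 1) :=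
      hu.differentiableOn one_ne_zero
    set g : EuclideanSpace ℝ (Fin d) → ℝ := fun z => u z - fderiv ℝ u x z with hg
    set s := segment ℝ x y with hs
    have hsub : s ⊆ ball (0 : EuclideanSpace ℝ (Fin d)) 1 :=
      (convex_ball (0 : EuclideanSpace ℝ (Fin d)) 1).segment_subset hx hy1
    have hderiv : ∀ z ∈ s, HasFDerivWithinAt g (fderiv ℝ u z - fderiv ℝ u x) s z := by
      intro z hz
      have hz1 := hsub hz
      have hud : HasFDerivAt u (fderiv ℝ u z) z :=
        (hdiff.differentiableAt (isOpen_ball.mem_nhds hz1)).hasFDerivAt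
      exact (hud.sub ((fderiv ℝ u x).hasFDerivAt)).hasFDerivWithinAt
    have hdistseg : ∀ z ∈ s, ‖z - x‖ ≤ ‖y - x‖ := by
      rintro z ⟨a, b, ha, hb, hab, rfl⟩
      have hzx : a • x + b • y - x = b • (y - x) := by
        rw [show a = 1 - b by linarith]
        module
      rw [hzx, norm_smul, Real.norm_eq_abs, abs_of_nonneg hb]
      nlinarith [norm_nonneg (y - x)]
    have hbound : ∀ z ∈ s, ‖fderiv ℝ u z - fderiv ℝ u x‖ ≤ C0 * ‖y - x‖ ^ (α x) := by
      intro z hz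
      by_cases hzx : z = x
      · subst hzx
        simp
        positivity
      · have h1 := hC x hx z (hsub hz) (Ne.symm hzx)
        rw [norm_sub_rev] at h1
        calc ‖fderiv ℝ u z - fderiv ℝ u x‖ ≤ C * ‖x - z‖ ^ (α x) := h1
          _ ≤ C0 * ‖y - x‖ ^ (α x) := by
            rw [norm_sub_rev]
            have h2 : ‖z - x‖ ^ (α x) ≤ ‖y - x‖ ^ (α x) :=
              Real.rpow_le_rpow (norm_nonneg _) (hdistseg z hz) (le_of_lt hαx.1)
            have h3 : (0:ℝ) ≤ ‖z - x‖ ^ (α x) := Real.rpow_nonneg (norm_nonneg _) _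
            nlinarith [Real.rpow_nonneg (norm_nonneg (y - x)) (α x)]
    have hmvt := Convex.norm_image_sub_le_of_norm_hasFDerivWithin_le hderiv hbound
      (convex_segment x y) (left_mem_segment ℝ x y) (right_mem_segment ℝ x y)
    have hgy : g y - g x = u y - u x - fderiv ℝ u x (y - x) := by
      rw [hg]
      simp [map_sub]
      ring
    rw [hgy] at hmvt
    have hval : u y - (u x - (fderiv ℝ u x) x + (fderiv ℝ u x) y)
        = u y - u x - (fderiv ℝ u x) (y - x) := by
      rw [map_sub]; ring
    rw [hval, Real.norm_eq_abs] at *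
    calc |u y - u x - (fderiv ℝ u x) (y - x)| ≤ C0 * ‖y - x‖ ^ (α x) * ‖y - x‖ := hmvt
      _ = C0 * ‖y - x‖ ^ ((1:ℝ) + α x) := by
        rw [add_comm (1:ℝ), Real.rpow_add_one hyx]; ring
      _ ≤ (C0 + 1) * r ^ ((1:ℝ) + α x) := by
        have hlt : ‖y - x‖ ≤ r := by
          have := mem_ball_iff_norm.mp hyr
          linarith
        have h4 : ‖y - x‖ ^ ((1:ℝ) + α x) ≤ r ^ ((1:ℝ) + α x) :=
          Real.rpow_le_rpow (norm_nonneg _) hlt (by linarith [hαx.1])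
        nlinarith [Real.rpow_nonneg (norm_nonneg (y - x)) ((1:ℝ) + α x)]

set_option maxHeartbeats 1000000 in
lemma reverse_dir {d : ℕ} (u : EuclideanSpace ℝ (Fin d) → ℝ)
    (α : EuclideanSpace ℝ (Fin d) → ℝ)
    (hα : ∀ x ∈ ball (0 : EuclideanSpace ℝ (Fin d)) 1, 0 < α x ∧ α x < 1)
    (hmod : Tendsto
      (fun t : ℝ => Real.log t * modulusOn (ball (0 : EuclideanSpace ℝ (Fin d)) 1) α t)
      (nhdsWithin 0 (Set.Ioi 0)) (nhds 0))
    (C : ℝ) (hCpos : 0 < C)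
    (hC : ∀ x ∈ ball (0 : EuclideanSpace ℝ (Fin d)) 1,
        ∃ (b : ℝ) (A : EuclideanSpace ℝ (Fin d)), ∀ r > (0 : ℝ),
          ∀ y ∈ ball x r ∩ ball (0 : EuclideanSpace ℝ (Fin d)) 1,
            |u y - (b + ⟪A, y⟫)| ≤ C * r ^ ((1 : ℝ) + α x)) :
    (∃ C : ℝ, ∀ x ∈ ball (0 : EuclideanSpace ℝ (Fin d)) 1,
        ∀ y ∈ ball (0 : EuclideanSpace ℝ (Fin d)) 1, x ≠ y →
        ‖fderiv ℝ u x - fderiv ℝ u y‖ ≤ C * ‖x - y‖ ^ (α x)) := by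
  classical
  choose! b A hbA using hC
  -- obtain δ from hmod
  have hev := Metric.tendsto_nhds.mp hmod 1 one_pos
  rw [eventually_nhdsWithin_iff, Metric.eventually_nhds_iff] at hev
  obtain ⟨δ, hδpos, hδ⟩ := hev
  set ρ₀ : ℝ := min δ 1 with hρ₀def
  have hρ₀pos : 0 < ρ₀ := lt_min hδpos one_pos
  have hρ₀le1 : ρ₀ ≤ 1 := min_le_right _ _
  set K : ℝ := 2 + ρ₀⁻¹ + 3 with hKdef
  have hKpos : 0 < K := by positivity
  refine ⟨32 * C * (1 + K), fun x hx y hy hxy => ?_⟩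
  have hαx := hα x hx
  have hαy := hα y hy
  set ρ : ℝ := ‖x - y‖ with hρ
  have hρpos : 0 < ρ := by
    rw [hρ, norm_pos_iff, sub_ne_zero]; exact hxy
  have hx1 : ‖x‖ < 1 := mem_ball_zero_iff.mp hx
  have hy1 : ‖y‖ < 1 := mem_ball_zero_iff.mp hy
  have hρlt2 : ρ < 2 := by
    calc ρ ≤ ‖x‖ + ‖y‖ := norm_sub_le x y
      _ < 2 := by linarith
  -- geometry: small ball inside both
  set m : EuclideanSpace ℝ (Fin d) := (2:ℝ)⁻¹ • (x + y) with hm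
  set w : EuclideanSpace ℝ (Fin d) := (1 - ρ/2) • m with hw
  have hmlt : ‖m‖ < 1 := by
    rw [hm, norm_smul]
    have : ‖x + y‖ ≤ ‖x‖ + ‖y‖ := norm_add_le x y
    rw [norm_inv, Real.norm_ofNat]
    nlinarith
  have hmx : ‖m - x‖ = ρ / 2 := by
    have : m - x = (2:ℝ)⁻¹ • (y - x) := by rw [hm]; module
    rw [this, norm_smul, norm_inv, Real.norm_ofNat, norm_sub_rev]
    rw [← hρ]; ring
  have hmy : ‖m - y‖ = ρ / 2 := by
    have : m - y = (2:ℝ)⁻¹ • (x - y) := by rw [hm]; module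
    rw [this, norm_smul, norm_inv, Real.norm_ofNat, ← hρ]; ring
  have hwm : ‖w - m‖ < ρ / 2 := by
    have : w - m = (-(ρ/2)) • m := by rw [hw]; module
    rw [this, norm_smul, Real.norm_eq_abs, abs_neg, abs_of_pos (by linarith)]
    nlinarith
  have hball : ∀ z ∈ ball w (ρ/4),
      (z ∈ ball x (2*ρ) ∩ ball (0:EuclideanSpace ℝ (Fin d)) 1) ∧
      (z ∈ ball y (2*ρ) ∩ ball (0:EuclideanSpace ℝ (Fin d)) 1) := by
    intro z hz
    rw [mem_ball_iff_norm] at hz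
    have hz1 : z ∈ ball (0:EuclideanSpace ℝ (Fin d)) 1 := by
      rw [mem_ball_zero_iff]
      have h1 : ‖z‖ ≤ ‖z - w‖ + ‖w‖ := by
        calc ‖z‖ = ‖z - w + w‖ := by congr 1; abel
          _ ≤ ‖z - w‖ + ‖w‖ := norm_add_le _ _
      have h2 : ‖w‖ = (1 - ρ/2) * ‖m‖ := by
        rw [hw, norm_smul, Real.norm_eq_abs, abs_of_pos (by linarith)]
      nlinarith [norm_nonneg m]
    have hzx : z ∈ ball x (2*ρ) := by
      rw [mem_ball, dist_eq_norm]
      calc ‖z - x‖ ≤ ‖z - w‖ + ‖w - m‖ + ‖m - x‖ := by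
            have := dist_triangle4 z w m x
            simpa [dist_eq_norm] using this
        _ < ρ/4 + ρ/2 + ρ/2 := by rw [hmx]; linarith
        _ < 2 * ρ := by linarith
    have hzy : z ∈ ball y (2*ρ) := by
      rw [mem_ball, dist_eq_norm]
      calc ‖z - y‖ ≤ ‖z - w‖ + ‖w - m‖ + ‖m - y‖ := by
            have := dist_triangle4 z w m y
            simpa [dist_eq_norm] using this
        _ < ρ/4 + ρ/2 + ρ/2 := by rw [hmy]; linarith
        _ < 2 * ρ := by linarith
    exact ⟨⟨hzx, hz1⟩, ⟨hzy, hz1⟩⟩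
  -- the affine functions differ by at most M on the small ball
  set M : ℝ := C * (2*ρ) ^ ((1:ℝ) + α x) + C * (2*ρ) ^ ((1:ℝ) + α y) with hM
  have hMbd : ∀ z ∈ ball w (ρ/4), |(b x - b y) + ⟪A x - A y, z⟫| ≤ M := by
    intro z hz
    obtain ⟨hzx, hzy⟩ := hball z hz
    have h1 := hbA x hx (2*ρ) (by linarith) z hzx
    have h2 := hbA y hy (2*ρ) (by linarith) z hzy
    have heq : (b x - b y) + ⟪A x - A y, z⟫
        = (u z - (b y + ⟪A y, z⟫)) - (u z - (b x + ⟪A x, z⟫)) := by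
      rw [inner_sub_left]; ring
    rw [heq]
    calc |(u z - (b y + ⟪A y, z⟫)) - (u z - (b x + ⟪A x, z⟫))|
        ≤ |u z - (b y + ⟪A y, z⟫)| + |u z - (b x + ⟪A x, z⟫)| := abs_sub _ _
      _ ≤ M := by rw [hM]; linarith
  have hAb : (ρ/4) * ‖A x - A y‖ ≤ 2 * M :=
    aff_bound (A x - A y) w (b x - b y) M (ρ/4) (by linarith) hMbd
  -- bound M
  have hrp : ∀ c : ℝ, 0 < c → c < 1 → (2*ρ) ^ ((1:ℝ) + c) ≤ 4 * ρ * ρ ^ c := by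
    intro c hc hc1
    have h2ρ : (0:ℝ) < 2*ρ := by linarith
    rw [Real.rpow_add h2ρ, Real.rpow_one, Real.mul_rpow (by norm_num) (le_of_lt hρpos)]
    have e1 : (2:ℝ) ^ c ≤ 2 := by
      calc (2:ℝ) ^ c ≤ (2:ℝ) ^ (1:ℝ) := Real.rpow_le_rpow_of_exponent_le one_le_two (by linarith)
        _ = 2 := Real.rpow_one 2
    have e2 : (0:ℝ) ≤ ρ ^ c := Real.rpow_nonneg (le_of_lt hρpos) c
    have e3 : (2:ℝ) ^ c * ρ ^ c ≤ 2 * ρ ^ c := mul_le_mul_of_nonneg_right e1 e2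
    nlinarith
  have hM4 : M ≤ 4 * C * ρ * (ρ ^ (α x) + ρ ^ (α y)) := by
    have g1 := hrp (α x) hαx.1 hαx.2
    have g2 := hrp (α y) hαy.1 hαy.2
    have g1' : C * (2*ρ) ^ ((1:ℝ) + α x) ≤ C * (4 * ρ * ρ ^ (α x)) :=
      mul_le_mul_of_nonneg_left g1 (le_of_lt hCpos)
    have g2' : C * (2*ρ) ^ ((1:ℝ) + α y) ≤ C * (4 * ρ * ρ ^ (α y)) :=
      mul_le_mul_of_nonneg_left g2 (le_of_lt hCpos)
    rw [hM]; ring_nf; ring_nf at g1' g2'; linarith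
  have hA32 : ‖A x - A y‖ ≤ 32 * C * (ρ ^ (α x) + ρ ^ (α y)) := by
    have h1 : (ρ/4) * ‖A x - A y‖ ≤ (ρ/4) * (32 * C * (ρ ^ (α x) + ρ ^ (α y))) := by
      calc (ρ/4) * ‖A x - A y‖ ≤ 2 * M := hAb
        _ ≤ (ρ/4) * (32 * C * (ρ ^ (α x) + ρ ^ (α y))) := by
            have : (ρ/4) * (32 * C * (ρ ^ (α x) + ρ ^ (α y)))
                = 8 * (C * ρ * (ρ ^ (α x) + ρ ^ (α y))) := by ring
            rw [this]
            have h2 : 4 * C * ρ * (ρ ^ (α x) + ρ ^ (α y))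
                = 4 * (C * ρ * (ρ ^ (α x) + ρ ^ (α y))) := by ring
            rw [h2] at hM4
            linarith
    exact le_of_mul_le_mul_left h1 (by linarith)
  -- bound ρ^(α y) by K * ρ^(α x)
  have hxαpos : (0:ℝ) ≤ ρ ^ (α x) := Real.rpow_nonneg (le_of_lt hρpos) _
  have hKey : ρ ^ (α y) ≤ K * ρ ^ (α x) := by
    rcases le_or_gt 1 ρ with h1ρ | h1ρ
    · have e1 : ρ ^ (α y) ≤ ρ ^ (1:ℝ) :=
        Real.rpow_le_rpow_of_exponent_le h1ρ (le_of_lt hαy.2)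
      have e2 : ρ ^ ((0:ℝ)) ≤ ρ ^ (α x) :=
        Real.rpow_le_rpow_of_exponent_le h1ρ (le_of_lt hαx.1)
      rw [Real.rpow_zero] at e2
      rw [Real.rpow_one] at e1
      have hK2 : (2:ℝ) ≤ K := by
        rw [hKdef]; have := inv_pos.mpr hρ₀pos; linarith
      calc ρ ^ (α y) ≤ 2 := by linarith
        _ = 2 * 1 := by ring
        _ ≤ K * ρ ^ (α x) := mul_le_mul hK2 e2 one_pos.le (by linarith)
    · rcases le_or_gt ρ₀ ρ with h2ρ | h2ρ
      · have e1 : ρ ^ (α y) ≤ 1 :=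
          Real.rpow_le_one (le_of_lt hρpos) (le_of_lt h1ρ) (le_of_lt hαy.1)
        have e2 : ρ ^ ((1:ℝ)) ≤ ρ ^ (α x) :=
          Real.rpow_le_rpow_of_exponent_ge hρpos (le_of_lt h1ρ) (le_of_lt hαx.2)
        rw [Real.rpow_one] at e2
        have hKinv : ρ₀⁻¹ ≤ K := by
          rw [hKdef]; linarith
        have h3 : ρ₀ ≤ ρ ^ (α x) := le_trans h2ρ e2
        have h4 : (1:ℝ) ≤ ρ₀⁻¹ * ρ ^ (α x) := by
          rw [← inv_mul_cancel₀ (ne_of_gt hρ₀pos)]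
          have := le_of_lt (inv_pos.mpr hρ₀pos)
          exact mul_le_mul_of_nonneg_left h3 this
        calc ρ ^ (α y) ≤ 1 := e1
          _ ≤ ρ₀⁻¹ * ρ ^ (α x) := h4
          _ ≤ K * ρ ^ (α x) := mul_le_mul_of_nonneg_right hKinv hxαpos
      · -- small scale: use the modulus of continuity
        set γ : ℝ := modulusOn (ball (0:EuclideanSpace ℝ (Fin d)) 1) α ρ with hγ
        have hργ : |Real.log ρ * γ| < 1 := by
          have hrd : dist ρ 0 < δ := by
            rw [Real.dist_eq, sub_zero, abs_of_pos hρpos]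
            calc ρ < ρ₀ := h2ρ
              _ ≤ δ := min_le_left _ _
          have := hδ hrd (mem_Ioi.mpr hρpos)
          rwa [Real.dist_eq, sub_zero] at this
        have hγmem : |α x - α y| ≤ γ := by
          rw [hγ]
          apply le_csSup
          · refine ⟨2, ?_⟩
            rintro c ⟨p, hp, q, hq, _, rfl⟩
            have h1 := hα p hp
            have h2 := hα q hq
            rw [abs_le]; constructor <;> linarith [abs_nonneg (α p - α q)]
          · exact ⟨x, hx, y, hy, by rw [dist_eq_norm], rfl⟩
        have hργ3 : ρ ^ (-γ) ≤ 3 := by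
          rw [Real.rpow_def_of_pos hρpos]
          have h1 := (abs_le.mp (le_of_lt hργ)).1
          have h2 : Real.log ρ * (-γ) ≤ 1 := by
            have heq : Real.log ρ * (-γ) = -(Real.log ρ * γ) := by ring
            rw [heq]; linarith
          have h3 := Real.exp_le_exp.mpr h2
          linarith [Real.exp_one_lt_d9]
        have e1 : ρ ^ (α y) ≤ ρ ^ (α x - γ) := by
          apply Real.rpow_le_rpow_of_exponent_ge hρpos (by linarith)
          have := abs_le.mp hγmem
          linarith [this.1]
        have e2 : ρ ^ (α x - γ) = ρ ^ (α x) * ρ ^ (-γ) := by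
          rw [sub_eq_add_neg, Real.rpow_add hρpos]
        have hK3 : (3:ℝ) ≤ K := by
          rw [hKdef]; have := inv_pos.mpr hρ₀pos; linarith
        calc ρ ^ (α y) ≤ ρ ^ (α x) * ρ ^ (-γ) := by rw [← e2]; exact e1
          _ ≤ ρ ^ (α x) * 3 := mul_le_mul_of_nonneg_left hργ3 hxαpos
          _ = 3 * ρ ^ (α x) := by ring
          _ ≤ K * ρ ^ (α x) := mul_le_mul_of_nonneg_right hK3 hxαpos
  -- identify the derivatives
  have hfx : fderiv ℝ u x = InnerProductSpace.toDual ℝ (EuclideanSpace ℝ (Fin d)) (A x) :=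
    fderiv_eq_of_affine_approx u x hx (α x) hαx.1 hαx.2 C hCpos (b x) (A x) (hbA x hx)
  have hfy : fderiv ℝ u y = InnerProductSpace.toDual ℝ (EuclideanSpace ℝ (Fin d)) (A y) :=
    fderiv_eq_of_affine_approx u y hy (α y) hαy.1 hαy.2 C hCpos (b y) (A y) (hbA y hy)
  have hnorm : ‖fderiv ℝ u x - fderiv ℝ u y‖ = ‖A x - A y‖ := by
    rw [hfx, hfy, ← map_sub]
    exact (InnerProductSpace.toDual ℝ (EuclideanSpace ℝ (Fin d))).norm_map _
  rw [hnorm]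
  calc ‖A x - A y‖ ≤ 32 * C * (ρ ^ (α x) + ρ ^ (α y)) := hA32
    _ ≤ 32 * C * (1 + K) * ρ ^ (α x) := by
        have h5 : ρ ^ (α x) + ρ ^ (α y) ≤ (1 + K) * ρ ^ (α x) := by
          rw [add_mul, one_mul]; linarith
        have h6 := mul_le_mul_of_nonneg_left h5 (show (0:ℝ) ≤ 32 * C by linarith)
        calc 32 * C * (ρ ^ (α x) + ρ ^ (α y)) ≤ 32 * C * ((1 + K) * ρ ^ (α x)) := h6
          _ = 32 * C * (1 + K) * ρ ^ (α x) := by ring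


/-- characterization of the variable-exponent Hölder space C^{1,α(·)}(B₁):
    finiteness of the seminorm sup_{x≠y} |Du(x)−Du(y)|/|x−y|^{α(x)} is equivalent to
    uniform first-order affine approximation at rate r^{1+α(x)} at every point. -/
theorem variable_holder_characterization
    (d : ℕ) (u : EuclideanSpace ℝ (Fin d) → ℝ)
    (α : EuclideanSpace ℝ (Fin d) → ℝ)
    (hu : ContDiffOn ℝ 1 u (ball (0 : EuclideanSpace ℝ (Fin d)) 1))
    (hα : ∀ x ∈ ball (0 : EuclideanSpace ℝ (Fin d)) 1, 0 < α x ∧ α x < 1)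
    (hαuc : UniformContinuousOn α (ball (0 : EuclideanSpace ℝ (Fin d)) 1))
    (hmod : Tendsto
      (fun t : ℝ => Real.log t * modulusOn (ball (0 : EuclideanSpace ℝ (Fin d)) 1) α t)
      (nhdsWithin 0 (Set.Ioi 0)) (nhds 0)) :
    (∃ C : ℝ, ∀ x ∈ ball (0 : EuclideanSpace ℝ (Fin d)) 1,
        ∀ y ∈ ball (0 : EuclideanSpace ℝ (Fin d)) 1, x ≠ y →
        ‖fderiv ℝ u x - fderiv ℝ u y‖ ≤ C * ‖x - y‖ ^ (α x)) ↔
    (∃ C > (0 : ℝ), ∀ x ∈ ball (0 : EuclideanSpace ℝ (Fin d)) 1,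
        ∃ (b : ℝ) (A : EuclideanSpace ℝ (Fin d)), ∀ r > (0 : ℝ),
          ∀ y ∈ ball x r ∩ ball (0 : EuclideanSpace ℝ (Fin d)) 1,
            |u y - (b + ⟪A, y⟫)| ≤ C * r ^ ((1 : ℝ) + α x)) := by
  constructor
  · rintro ⟨C, hC⟩
    exact forward_dir u α hu hα C hC
  · rintro ⟨C, hCpos, hC⟩
    exact reverse_dir u α hα hmod C hCpos hC
end
end

section
/- Let F^± be (λ,Λ)-uniformly elliptic, let a ∈ (0,1) be constant, let f^± be bounded and uniformly continuous on B_1^±, let g be bounded and uniformly continuous on T, and let u be a bounded viscosity subsolution of the flat transmission problem ω(x)F^±(D²u) = f^± in B_1^±, u_{x_d}⁺ − u_{x_d}⁻ = g on T. Fix 0 < ρ < 1 with closure(B_ρ) ⊂ B_1. Then for every sufficiently small ε > 0, the upper ε-envelope u^ε is a viscosity subsolution of ω(x)F^±(D²u^ε) = f^± − γ_{f^±}(r_ε) in B_r^± and (u^ε)_{x_d}⁺ − (u^ε)_{x_d}⁻ = g − γ_g(r_ε) on B_r ∩ {x_d = 0}, for every r ≤ ρ − r_ε, where r_ε = (2ε‖u‖_{L^∞(B_1)})^{1/2}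 and γ_h(t) = sup over |x−y| ≤ t of |h(x)−h(y)| is the modulus of continuity of h. -/
open Metric MeasureTheory Real Filter Set
open scoped RealInnerProductSpace Classical

noncomputable section

/-- ℝ^{n+1}, the ambient Euclidean space (d = n+1 ≥ 2 when 1 ≤ n). -/
abbrev E (n : ℕ) : Type := EuclideanSpace ℝ (Fin (n+1))

/-- ℝ^n, the horizontal Euclidean space. -/
abbrev E' (n : ℕ) : Type := EuclideanSpace ℝ (Fin n)

variable {n : ℕ}

/-- The first n coordinates x' of a point x = (x', x_d). -/
def hd (x : E n) : E' n := WithLp.toLp 2 (fun i : Fin n => x i.castSucc)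

/-- The last coordinate x_d of a point x = (x', x_d). -/
def lst (x : E n) : ℝ := x (Fin.last n)

/-- Assemble a point of ℝ^{n+1} from horizontal and vertical parts. -/
def put (v : E' n) (t : ℝ) : E n :=
  WithLp.toLp 2 (fun i : Fin (n+1) => (Fin.lastCases t (fun j => v j) i : ℝ))

/-- The vertical unit vector e_d. -/
def ed (n : ℕ) : E n := EuclideanSpace.single (Fin.last n) 1

/-- The Hessian matrix D²φ(x). -/
def hess (φ : E n → ℝ) (x : E n) : Matrix (Fin (n+1)) (Fin (n+1)) ℝ :=
  fun i j => iteratedFDeriv ℝ 2 φ x ![EuclideanSpace.single i 1, EuclideanSpace.single j 1]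

/-- Operator norm of a symmetric matrix (max |eigenvalue|). -/
def symNorm {m : ℕ} (M : Matrix (Fin m) (Fin m) ℝ) : ℝ :=
  if h : M.IsHermitian then ⨆ i, |h.eigenvalues i| else 0

/-- Pucci maximal operator M⁺: Λ·(sum of positive eigenvalues) + λ·(sum of negative ones). -/
def pucciSup {m : ℕ} (lam Lam : ℝ) (M : Matrix (Fin m) (Fin m) ℝ) : ℝ :=
  if h : M.IsHermitian then
    ∑ i, (Lam * max (h.eigenvalues i) 0 + lam * min (h.eigenvalues i) 0)
  else 0

/-- Pucci minimal operator M⁻: λ·(sum of positive eigenvalues) + Λ·(sum of negative ones). -/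
def pucciInf {m : ℕ} (lam Lam : ℝ) (M : Matrix (Fin m) (Fin m) ℝ) : ℝ :=
  if h : M.IsHermitian then
    ∑ i, (lam * max (h.eigenvalues i) 0 + Lam * min (h.eigenvalues i) 0)
  else 0

/-- (λ,Λ)-uniform ellipticity of an operator F on symmetric matrices. -/
def UniformlyElliptic {m : ℕ} (lam Lam : ℝ) (F : Matrix (Fin m) (Fin m) ℝ → ℝ) : Prop :=
  ∀ M N : Matrix (Fin m) (Fin m) ℝ, M.IsHermitian → N.PosSemidef →
    lam * symNorm N ≤ F (M + N) - F M ∧ F (M + N) - F M ≤ Lam * symNorm N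

/-- Ω⁺ = B₁ ∩ {x_d > Ψ(x')}. -/
def OmP (Ψ : E' n → ℝ) : Set (E n) := {x | x ∈ ball (0 : E n) 1 ∧ Ψ (hd x) < lst x}

/-- Ω⁻ = B₁ ∩ {x_d < Ψ(x')}. -/
def OmM (Ψ : E' n → ℝ) : Set (E n) := {x | x ∈ ball (0 : E n) 1 ∧ lst x < Ψ (hd x)}

/-- Γ = B₁ ∩ {x_d = Ψ(x')}. -/
def Gam (Ψ : E' n → ℝ) : Set (E n) := {x | x ∈ ball (0 : E n) 1 ∧ lst x = Ψ (hd x)}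

/-- Unit normal to Γ pointing towards Ω⁺. -/
def nuv (Ψ : E' n → ℝ) (x : E n) : E n :=
  ((1 + ‖gradient Ψ (hd x)‖ ^ 2) ^ (-(1/2 : ℝ))) • put (-(gradient Ψ (hd x))) 1

/-- The degenerate weight ω(x) = |x_d − Ψ(x')|^{a(x)}. -/
def wgt (Ψ : E' n → ℝ) (a : E n → ℝ) (x : E n) : ℝ := |lst x - Ψ (hd x)| ^ (a x)

/-- φ touches u from above at x₀ within s (on a δ-neighborhood). -/
def TouchAbove (u φ : E n → ℝ) (s : Set (E n)) (x₀ : E n) (δ : ℝ) : Prop :=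
  φ x₀ = u x₀ ∧ ∀ x ∈ ball x₀ δ ∩ s, u x ≤ φ x

/-- φ touches u from below at x₀ within s (on a δ-neighborhood). -/
def TouchBelow (u φ : E n → ℝ) (s : Set (E n)) (x₀ : E n) (δ : ℝ) : Prop :=
  φ x₀ = u x₀ ∧ ∀ x ∈ ball x₀ δ ∩ s, φ x ≤ u x

/-- Interior viscosity subsolution of ω(x) F(D²u) = f on the open set Ω. -/
def SubIn (F : Matrix (Fin (n+1)) (Fin (n+1)) ℝ → ℝ) (ω f : E n → ℝ) (Ω : Set (E n))
    (u : E n → ℝ) : Prop :=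
  ∀ x₀ ∈ Ω, ∀ φ : E n → ℝ, ∀ δ > 0, ContDiffOn ℝ 2 φ (ball x₀ δ) →
    TouchAbove u φ Ω x₀ δ → f x₀ ≤ ω x₀ * F (hess φ x₀)

/-- Interior viscosity supersolution of ω(x) F(D²u) = f on the open set Ω. -/
def SupIn (F : Matrix (Fin (n+1)) (Fin (n+1)) ℝ → ℝ) (ω f : E n → ℝ) (Ω : Set (E n))
    (u : E n → ℝ) : Prop :=
  ∀ x₀ ∈ Ω, ∀ φ : E n → ℝ, ∀ δ > 0, ContDiffOn ℝ 2 φ (ball x₀ δ) →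
    TouchBelow u φ Ω x₀ δ → ω x₀ * F (hess φ x₀) ≤ f x₀

/-- A two-sided C¹ test pair (φ⁺, φ⁻), glued continuously along Γ, touching u from above. -/
def TransTestAbove (u φp φm : E n → ℝ) (Ωp Ωm Γs : Set (E n)) (x₀ : E n) (δ : ℝ) : Prop :=
  ContDiffOn ℝ 1 φp (ball x₀ δ) ∧ ContDiffOn ℝ 1 φm (ball x₀ δ) ∧
  (∀ x ∈ ball x₀ δ ∩ Γs, φp x = φm x) ∧ φp x₀ = u x₀ ∧
  (∀ x ∈ ball x₀ δ ∩ (Ωp ∪ Γs), u x ≤ φp x) ∧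
  (∀ x ∈ ball x₀ δ ∩ (Ωm ∪ Γs), u x ≤ φm x)

/-- A two-sided C¹ test pair touching u from below. -/
def TransTestBelow (u φp φm : E n → ℝ) (Ωp Ωm Γs : Set (E n)) (x₀ : E n) (δ : ℝ) : Prop :=
  ContDiffOn ℝ 1 φp (ball x₀ δ) ∧ ContDiffOn ℝ 1 φm (ball x₀ δ) ∧
  (∀ x ∈ ball x₀ δ ∩ Γs, φp x = φm x) ∧ φp x₀ = u x₀ ∧
  (∀ x ∈ ball x₀ δ ∩ (Ωp ∪ Γs), φp x ≤ u x) ∧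
  (∀ x ∈ ball x₀ δ ∩ (Ωm ∪ Γs), φm x ≤ u x)

/-- Viscosity transmission inequality u_ν⁺ − u_ν⁻ ≥ g on Γ (subsolution condition). -/
def TransSub (Ωp Ωm Γs : Set (E n)) (ν : E n → E n) (g u : E n → ℝ) : Prop :=
  ∀ x₀ ∈ Γs, ∀ φp φm : E n → ℝ, ∀ δ > 0, TransTestAbove u φp φm Ωp Ωm Γs x₀ δ →
    g x₀ ≤ fderiv ℝ φp x₀ (ν x₀) - fderiv ℝ φm x₀ (ν x₀)

/-- Viscosity transmission inequality u_ν⁺ − u_ν⁻ ≤ g on Γ (supersolution condition). -/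
def TransSup (Ωp Ωm Γs : Set (E n)) (ν : E n → E n) (g u : E n → ℝ) : Prop :=
  ∀ x₀ ∈ Γs, ∀ φp φm : E n → ℝ, ∀ δ > 0, TransTestBelow u φp φm Ωp Ωm Γs x₀ δ →
    fderiv ℝ φp x₀ (ν x₀) - fderiv ℝ φm x₀ (ν x₀) ≤ g x₀

/-- Viscosity solution of the curved transmission problem
    ω(x)F^±(D²u) = f^± in Ω^±, u_ν⁺ − u_ν⁻ = g on Γ. -/
def Sol (Ψ : E' n → ℝ) (a : E n → ℝ) (Fp Fm : Matrix (Fin (n+1)) (Fin (n+1)) ℝ → ℝ)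
    (fp fm g u : E n → ℝ) : Prop :=
  SubIn Fp (wgt Ψ a) fp (OmP Ψ) u ∧ SupIn Fp (wgt Ψ a) fp (OmP Ψ) u ∧
  SubIn Fm (wgt Ψ a) fm (OmM Ψ) u ∧ SupIn Fm (wgt Ψ a) fm (OmM Ψ) u ∧
  TransSub (OmP Ψ) (OmM Ψ) (Gam Ψ) (nuv Ψ) g u ∧
  TransSup (OmP Ψ) (OmM Ψ) (Gam Ψ) (nuv Ψ) g u

/-- Flat setting: B_r⁺ = B_r ∩ {x_d > 0}. -/
def BpR (n : ℕ) (r : ℝ) : Set (E n) := {x | x ∈ ball (0 : E n) r ∧ 0 < lst x}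

/-- Flat setting: B_r⁻ = B_r ∩ {x_d < 0}. -/
def BmR (n : ℕ) (r : ℝ) : Set (E n) := {x | x ∈ ball (0 : E n) r ∧ lst x < 0}

/-- Flat setting: T_r = B_r ∩ {x_d = 0}. -/
def TR (n : ℕ) (r : ℝ) : Set (E n) := {x | x ∈ ball (0 : E n) r ∧ lst x = 0}

/-- Flat weight ω(x) = |x_d|^a (constant exponent). -/
def wflat (n : ℕ) (a : ℝ) (x : E n) : ℝ := |lst x| ^ a

/-- Viscosity subsolution of the flat transmission problem on B_r. -/
def FlatSub (r a : ℝ) (Fp Fm : Matrix (Fin (n+1)) (Fin (n+1)) ℝ → ℝ)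
    (fp fm g u : E n → ℝ) : Prop :=
  SubIn Fp (wflat n a) fp (BpR n r) u ∧ SubIn Fm (wflat n a) fm (BmR n r) u ∧
  TransSub (BpR n r) (BmR n r) (TR n r) (fun _ => ed n) g u

/-- Viscosity supersolution of the flat transmission problem on B_r. -/
def FlatSup (r a : ℝ) (Fp Fm : Matrix (Fin (n+1)) (Fin (n+1)) ℝ → ℝ)
    (fp fm g u : E n → ℝ) : Prop :=
  SupIn Fp (wflat n a) fp (BpR n r) u ∧ SupIn Fm (wflat n a) fm (BmR n r) u ∧
  TransSup (BpR n r) (BmR n r) (TR n r) (fun _ => ed n) g u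

/-- Viscosity solution of the flat transmission problem on B_r. -/
def FlatSol (r a : ℝ) (Fp Fm : Matrix (Fin (n+1)) (Fin (n+1)) ℝ → ℝ)
    (fp fm g u : E n → ℝ) : Prop :=
  FlatSub r a Fp Fm fp fm g u ∧ FlatSup r a Fp Fm fp fm g u

/-- Sup norm over a set. -/
def supN (s : Set (E n)) (u : E n → ℝ) : ℝ := sSup ((fun x => |u x|) '' s)

/-- Sup norm over a set of the horizontal space. -/
def supN' (s : Set (E' n)) (u : E' n → ℝ) : ℝ := sSup ((fun x => |u x|) '' s)

/-- Weighted L^p norm ‖f·ω⁻¹‖_{L^p(s)}. -/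
def lpwN (p : ℝ) (ω : E n → ℝ) (s : Set (E n)) (f : E n → ℝ) : ℝ :=
  (eLpNorm (fun x => f x / ω x) (ENNReal.ofReal p) (volume.restrict s)).toReal

/-- Hölder seminorm of exponent α on a set. -/
def holderSemi (α : ℝ) (s : Set (E n)) (g : E n → ℝ) : ℝ :=
  sSup {c | ∃ x ∈ s, ∃ y ∈ s, x ≠ y ∧ c = |g x - g y| / ‖x - y‖ ^ α}

/-- Hölder norm ‖g‖_{C^α(s)}. -/
def holderN (α : ℝ) (s : Set (E n)) (g : E n → ℝ) : ℝ := supN s g + holderSemi α s g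

/-- Hölder seminorm of DΨ of exponent α on a subset of the horizontal space. -/
def grad1Semi (α : ℝ) (s : Set (E' n)) (Ψ : E' n → ℝ) : ℝ :=
  sSup {c | ∃ x ∈ s, ∃ y ∈ s, x ≠ y ∧ c = ‖fderiv ℝ Ψ x - fderiv ℝ Ψ y‖ / ‖x - y‖ ^ α}

/-- C^{1,α} norm of Ψ on a set. -/
def c1aN (α : ℝ) (s : Set (E' n)) (Ψ : E' n → ℝ) : ℝ :=
  supN' s Ψ + sSup ((fun x => ‖fderiv ℝ Ψ x‖) '' s) + grad1Semi α s Ψ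

/-- Modulus of continuity of h on a set. -/
def modOn (s : Set (E n)) (h : E n → ℝ) (t : ℝ) : ℝ :=
  sSup {c | ∃ x ∈ s, ∃ y ∈ s, dist x y ≤ t ∧ c = |h x - h y|}

/-- Membership in C^α(s). -/
def HolderMemOn (α : ℝ) (s : Set (E n)) (g : E n → ℝ) : Prop :=
  ∃ C, ∀ x ∈ s, ∀ y ∈ s, |g x - g y| ≤ C * ‖x - y‖ ^ α

/-- Membership in C^{1,α}(s) (as the restriction of a globally C¹ function). -/
def MemC1a (α : ℝ) (s : Set (E' n)) (Ψ : E' n → ℝ) : Prop :=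
  ContDiff ℝ 1 Ψ ∧ ∃ C, ∀ x ∈ s, ∀ y ∈ s, ‖fderiv ℝ Ψ x - fderiv ℝ Ψ y‖ ≤ C * ‖x - y‖ ^ α

/-- Boundedness on a set. -/
def BddOnSet (s : Set (E n)) (f : E n → ℝ) : Prop := ∃ K, ∀ x ∈ s, |f x| ≤ K

/-- The standing assumptions 2.2 of the paper (with p the summability exponent). -/
def Standing (lam Lam α₀ abar p : ℝ) (Fp Fm : Matrix (Fin (n+1)) (Fin (n+1)) ℝ → ℝ)
    (a : E n → ℝ) (Ψ : E' n → ℝ) (fp fm g : E n → ℝ) : Prop :=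
  UniformlyElliptic lam Lam Fp ∧ UniformlyElliptic lam Lam Fm ∧
  ContinuousOn a (closedBall (0 : E n) 1) ∧
  (∀ x ∈ closedBall (0 : E n) 1, 0 ≤ a x) ∧
  IsGreatest (a '' closedBall (0 : E n) 1) abar ∧ abar < 1 ∧
  Tendsto (fun t : ℝ => Real.log (1/t) * modOn (closedBall (0 : E n) 1) a t)
    (nhdsWithin 0 (Set.Ioi 0)) (nhds 0) ∧
  ContinuousOn fp (OmP Ψ) ∧ ContinuousOn fm (OmM Ψ) ∧
  BddOnSet (OmP Ψ) fp ∧ BddOnSet (OmM Ψ) fm ∧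
  MemLp (fun x => fp x / wgt Ψ a x) (ENNReal.ofReal p) (volume.restrict (OmP Ψ)) ∧
  MemLp (fun x => fm x / wgt Ψ a x) (ENNReal.ofReal p) (volume.restrict (OmM Ψ)) ∧
  HolderMemOn α₀ (Gam Ψ) g ∧
  (∃ K : Set (E n), IsCompact K ∧ K ⊆ Gam Ψ ∧ ∀ x ∈ Gam Ψ, x ∉ K → g x = 0) ∧
  MemC1a α₀ (closedBall (0 : E' n) 1) Ψ

/-- Upper ε-envelope of u in the x'-direction, relative to closure(B_ρ). -/
def upperEnv {n : ℕ} (ρ ε : ℝ) (u : E n → ℝ) (y : E n) : ℝ :=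
  sSup {c | ∃ x : E n, x ∈ closedBall (0 : E n) ρ ∧ lst x = lst y ∧
    c = u x - ‖hd x - hd y‖ ^ 2 / ε}



open Metric Set

variable {EE FF : Type*} [NormedAddCommGroup EE] [NormedSpace ℝ EE]
  [NormedAddCommGroup FF] [NormedSpace ℝ FF]

theorem fderiv_comp_sub' (f : EE → FF) (v x : EE) :
    fderiv ℝ (fun y => f (y - v)) x = fderiv ℝ f (x - v) := by
  by_cases h : DifferentiableAt ℝ f (x - v)
  · have h1 : HasFDerivAt (fun y : EE => y - v) (ContinuousLinearMap.id ℝ EE) x := by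
      simpa using (hasFDerivAt_id x).sub_const v
    have := (h.hasFDerivAt.comp x h1)
    simpa [Function.comp_def] using this.fderiv
  · have h2 : ¬ DifferentiableAt ℝ (fun y => f (y - v)) x := by
      intro hc
      apply h
      have h3 : DifferentiableAt ℝ (fun y : EE => y + v) (x - v) := by
        exact (differentiable_id.add_const v) _
      have hc' : DifferentiableAt ℝ (fun y => f (y - v)) ((fun y : EE => y + v) (x - v)) := by
        simpa using hc
      have h4 := hc'.comp (x - v) h3
      have h5 : ((fun y => f (y - v)) ∘ fun y : EE => y + v) = f := by
        funext y; simp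
      rwa [h5] at h4
    rw [fderiv_zero_of_not_differentiableAt h, fderiv_zero_of_not_differentiableAt h2]

theorem iteratedFDeriv_comp_sub'' (f : EE → FF) (v : EE) (k : ℕ) :
    (fun x => iteratedFDeriv ℝ k (fun y => f (y - v)) x)
      = fun x => iteratedFDeriv ℝ k f (x - v) := by
  induction k with
  | zero =>
    funext x
    ext m
    simp [iteratedFDeriv_zero_apply]
  | succ k ih =>
    funext x
    ext m
    rw [iteratedFDeriv_succ_apply_left, iteratedFDeriv_succ_apply_left]
    have : (iteratedFDeriv ℝ k fun y => f (y - v)) = fun x => iteratedFDeriv ℝ k f (x - v) := ih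
    rw [this, fderiv_comp_sub' (iteratedFDeriv ℝ k f) v x]

theorem iteratedFDeriv_two_add_const (f : EE → FF) (c : FF) (x : EE) :
    iteratedFDeriv ℝ 2 (fun y => f y + c) x = iteratedFDeriv ℝ 2 f x := by
  have h1 : (fun x => iteratedFDeriv ℝ 1 (fun y => f y + c) x)
      = fun x => iteratedFDeriv ℝ 1 f x := by
    funext x; ext m
    rw [iteratedFDeriv_one_apply, iteratedFDeriv_one_apply, fderiv_add_const]
  ext m
  show (iteratedFDeriv ℝ (1+1) (fun y => f y + c) x) m = (iteratedFDeriv ℝ (1+1) f x) m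
  rw [iteratedFDeriv_succ_apply_left, iteratedFDeriv_succ_apply_left]
  have : (iteratedFDeriv ℝ 1 fun y => f y + c) = iteratedFDeriv ℝ 1 f := h1
  rw [this]

theorem usc_max_on_compact {X : Type*} [MetricSpace X] {S : Set X} (hS : IsCompact S)
    (hne : S.Nonempty) {f : X → ℝ} (hf : UpperSemicontinuousOn f S)
    (hbd : ∃ K, ∀ x ∈ S, f x ≤ K) :
    ∃ xm ∈ S, ∀ x ∈ S, f x ≤ f xm := by
  obtain ⟨K, hK⟩ := hbd
  have hbdd : BddAbove (f '' S) := ⟨K, by rintro _ ⟨x, hx, rfl⟩; exact hK x hx⟩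
  have hnim : (f '' S).Nonempty := hne.image f
  set M := sSup (f '' S) with hM
  have hMle : ∀ x ∈ S, f x ≤ M := fun x hx => le_csSup hbdd ⟨x, hx, rfl⟩
  -- choose approximating sequence
  have hsel : ∀ k : ℕ, ∃ x ∈ S, M - 1/(k+1) < f x := by
    intro k
    have h1 : M - 1/(k+1) < M := by
      have : (0:ℝ) < 1/(k+1) := by positivity
      linarith
    obtain ⟨y, ⟨x, hx, rfl⟩, hy⟩ := exists_lt_of_lt_csSup hnim h1
    exact ⟨x, hx, hy⟩
  choose xs hxs hfxs using hsel
  obtain ⟨xm, hxmS, φ, hφ, hconv⟩ := hS.tendsto_subseq hxs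
  refine ⟨xm, hxmS, fun x hx => (hMle x hx).trans ?_⟩
  by_contra hlt
  push_neg at hlt
  set y := (f xm + M)/2 with hy
  have hy1 : f xm < y := by simp only [hy]; linarith
  have hy2 : y < M := by simp only [hy]; linarith
  have hev := hf xm hxmS y hy1
  have htend : Tendsto (fun k => xs (φ k)) atTop (nhdsWithin xm S) := by
    rw [tendsto_nhdsWithin_iff]
    exact ⟨hconv, Eventually.of_forall fun k => hxs (φ k)⟩
  have hev2 : ∀ᶠ k in atTop, f (xs (φ k)) < y := htend.eventually hev
  have hev3 : ∀ᶠ k in atTop, y < f (xs (φ k)) := by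
    have htnd : Tendsto (fun k : ℕ => M - 1/(k+1 : ℝ)) atTop (nhds M) := by
      have : Tendsto (fun k : ℕ => 1/(k+1 : ℝ)) atTop (nhds 0) :=
        tendsto_one_div_add_atTop_nhds_zero_nat
      simpa using tendsto_const_nhds.sub this
    have := htnd.eventually (eventually_gt_nhds hy2)
    filter_upwards [this] with k hk
    refine hk.trans_le ?_
    calc M - 1/(k+1 : ℝ) ≤ M - 1/(φ k + 1 : ℝ) := by
          have h1 : (k : ℝ) + 1 ≤ (φ k : ℝ) + 1 := by
            have : (k:ℝ) ≤ (φ k : ℝ) := Nat.cast_le.mpr hφ.le_apply; linarith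
          have : 1/((φ k : ℝ)+1) ≤ 1/((k:ℝ)+1) := by
            apply one_div_le_one_div_of_le (by positivity) h1
          linarith
      _ ≤ f (xs (φ k)) := (hfxs (φ k)).le
  obtain ⟨k, h1, h2⟩ := (hev2.and hev3).exists
  linarith

/-! ### Auxiliary lemmas -/

theorem lst_sub' (x y : E n) : lst (x - y) = lst x - lst y := rfl

theorem hd_sub' (x y : E n) : hd (x - y) = hd x - hd y := by
  ext i; simp [hd]

theorem norm_eq_hd_of_lst_eq {x y : E n} (h : lst x = lst y) :
    ‖x - y‖ = ‖hd x - hd y‖ := by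
  rw [EuclideanSpace.norm_eq, EuclideanSpace.norm_eq]
  congr 1
  rw [Fin.sum_univ_castSucc]
  have h0 : (x - y) (Fin.last n) = 0 := by
    have := lst_sub' x y
    rw [h] at this
    simpa [lst] using this
  rw [h0]
  simp only [norm_zero]
  ring_nf
  rw [← hd_sub']; rfl

theorem upperEnv_max {n : ℕ} {ρ ε : ℝ} (hρ1 : ρ < 1) (hε : 0 < ε)
    {u : E n → ℝ} (hu : UpperSemicontinuousOn u (ball (0:E n) 1))
    {K : ℝ} (hub : ∀ x ∈ ball (0:E n) 1, |u x| ≤ K)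
    {y : E n} (hy : y ∈ closedBall (0:E n) ρ) :
    ∃ xm ∈ closedBall (0:E n) ρ, lst xm = lst y ∧
      upperEnv ρ ε u y = u xm - ‖hd xm - hd y‖^2/ε ∧
      ∀ x ∈ closedBall (0:E n) ρ, lst x = lst y →
        u x - ‖hd x - hd y‖^2/ε ≤ u xm - ‖hd xm - hd y‖^2/ε := by
  set S : Set (E n) := closedBall (0:E n) ρ ∩ {x | lst x = lst y} with hSdef
  have hSsub : S ⊆ ball (0:E n) 1 := by
    intro x hx
    have := mem_closedBall.mp hx.1
    rw [mem_ball]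
    calc dist x 0 ≤ ρ := this
      _ < 1 := hρ1
  have hlst : Continuous (fun x : E n => lst x) :=
    (continuous_apply _).comp (PiLp.continuous_ofLp ..)
  have hScomp : IsCompact S := by
    apply (isCompact_closedBall _ _).inter_right
    exact isClosed_eq hlst continuous_const
  have hSne : S.Nonempty := ⟨y, hy, rfl⟩
  set h : E n → ℝ := fun x => u x - ‖hd x - hd y‖^2/ε with hhdef
  have hcont : Continuous fun x : E n => -(‖hd x - hd y‖^2/ε) := by
    have hhd : Continuous (fun x : E n => hd x) := by
      exact (PiLp.continuous_toLp ..).comp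
        (continuous_pi fun i => (continuous_apply _).comp (PiLp.continuous_ofLp ..))
    fun_prop
  have husc : UpperSemicontinuousOn h S := by
    have h1 : UpperSemicontinuousOn u S := hu.mono hSsub
    have h2 : UpperSemicontinuousOn (fun x : E n => -(‖hd x - hd y‖^2/ε)) S :=
      (hcont.continuousOn).upperSemicontinuousOn
    have := h1.add h2
    simpa [hhdef, sub_eq_add_neg] using this
  have hbd : ∃ C, ∀ x ∈ S, h x ≤ C := by
    refine ⟨K, fun x hx => ?_⟩
    have h1 : u x ≤ K := (abs_le.mp (hub x (hSsub hx))).2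
    have h2 : 0 ≤ ‖hd x - hd y‖^2/ε := by positivity
    simp only [hhdef]
    linarith
  obtain ⟨xm, hxmS, hmax⟩ := usc_max_on_compact hScomp hSne husc hbd
  refine ⟨xm, hxmS.1, hxmS.2, ?_, fun x hx1 hx2 => hmax x ⟨hx1, hx2⟩⟩
  have hgr : IsGreatest {c | ∃ x : E n, x ∈ closedBall (0 : E n) ρ ∧ lst x = lst y ∧
      c = u x - ‖hd x - hd y‖ ^ 2 / ε} (h xm) := by
    constructor
    · exact ⟨xm, hxmS.1, hxmS.2, rfl⟩
    · rintro c ⟨x, hx1, hx2, rfl⟩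
      exact hmax x ⟨hx1, hx2⟩
  exact hgr.csSup_eq

theorem le_upperEnv {n : ℕ} {ρ ε : ℝ} (hρ1 : ρ < 1) (hε : 0 < ε)
    {u : E n → ℝ} (hu : UpperSemicontinuousOn u (ball (0:E n) 1))
    {K : ℝ} (hKb : ∀ x ∈ ball (0:E n) 1, |u x| ≤ K)
    {x y : E n} (hx : x ∈ closedBall (0:E n) ρ) (hy : y ∈ closedBall (0:E n) ρ)
    (hl : lst x = lst y) :
    u x - ‖hd x - hd y‖^2/ε ≤ upperEnv ρ ε u y := by
  obtain ⟨xm, hxm, hlxm, heq, hmax⟩ := upperEnv_max hρ1 hε hu hKb hy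
  rw [heq]
  exact hmax x hx hl

theorem env_setup {n : ℕ} {ρ ε r K : ℝ} (hρ1 : ρ < 1) (hε : 0 < ε)
    (hrρ : r + Real.sqrt (2*ε*K) ≤ ρ)
    {u : E n → ℝ} (hu : UpperSemicontinuousOn u (ball (0:E n) 1))
    (hKb : ∀ x ∈ ball (0:E n) 1, |u x| ≤ K)
    {x₀ : E n} (hx₀ : ‖x₀‖ < r) (hr : 0 < r) :
    ∃ xm : E n, lst xm = lst x₀ ∧ ‖xm‖ < ρ ∧ dist x₀ xm ≤ Real.sqrt (2*ε*K) ∧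
      upperEnv ρ ε u x₀ = u xm - ‖hd xm - hd x₀‖^2/ε ∧
      ∀ x : E n, x ∈ closedBall (0:E n) ρ → x - (xm - x₀) ∈ closedBall (0:E n) ρ →
        u x ≤ upperEnv ρ ε u (x - (xm - x₀)) + ‖hd xm - hd x₀‖^2/ε := by
  have hrε0 : (0:ℝ) ≤ Real.sqrt (2*ε*K) := Real.sqrt_nonneg _
  have hrρ' : r ≤ ρ := by linarith
  have hx₀ρ : x₀ ∈ closedBall (0:E n) ρ := by
    rw [mem_closedBall, dist_zero_right]; linarith
  have hx₀1 : x₀ ∈ ball (0:E n) 1 := by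
    rw [mem_ball, dist_zero_right]; linarith
  obtain ⟨xm, hxmρ, hlxm, heq, hmax⟩ := upperEnv_max hρ1 hε hu hKb hx₀ρ
  have hxm1 : xm ∈ ball (0:E n) 1 := by
    have := mem_closedBall.mp hxmρ
    rw [mem_ball]
    calc dist xm 0 ≤ ρ := this
      _ < 1 := hρ1
  -- the quadratic bound
  have hueq : u x₀ ≤ u xm - ‖hd xm - hd x₀‖^2/ε := by
    have := hmax x₀ hx₀ρ rfl
    simpa using this
  have h2K : u xm - u x₀ ≤ 2*K := by
    have h1 := abs_le.mp (hKb xm hxm1)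
    have h2 := abs_le.mp (hKb x₀ hx₀1)
    linarith [h1.2, h2.1]
  have hsq : ‖hd xm - hd x₀‖^2 ≤ 2*ε*K := by
    have hc : ‖hd xm - hd x₀‖^2/ε ≤ 2*K := by linarith
    calc ‖hd xm - hd x₀‖^2 ≤ 2*K*ε := (div_le_iff₀ hε).mp hc
      _ = 2*ε*K := by ring
  have hnle : ‖hd xm - hd x₀‖ ≤ Real.sqrt (2*ε*K) := by
    rw [show ‖hd xm - hd x₀‖ = Real.sqrt (‖hd xm - hd x₀‖^2) from
      (Real.sqrt_sq (norm_nonneg _)).symm]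
    exact Real.sqrt_le_sqrt hsq
  have hnxm : ‖xm - x₀‖ = ‖hd xm - hd x₀‖ := norm_eq_hd_of_lst_eq hlxm
  have hdist : dist x₀ xm ≤ Real.sqrt (2*ε*K) := by
    rw [dist_eq_norm, ← norm_neg, neg_sub, hnxm]; exact hnle
  have hxmlt : ‖xm‖ < ρ := by
    have h1 : ‖xm‖ ≤ ‖x₀‖ + ‖xm - x₀‖ := by
      have := norm_add_le x₀ (xm - x₀)
      rwa [add_sub_cancel] at this
    rw [hnxm] at h1
    linarith
  refine ⟨xm, hlxm, hxmlt, hdist, heq, ?_⟩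
  intro x hxρ hxvρ
  have hlxv : lst x = lst (x - (xm - x₀)) := by
    rw [lst_sub', lst_sub', hlxm, sub_self, sub_zero]
  have h1 := le_upperEnv hρ1 hε hu hKb hxρ hxvρ hlxv
  have h2 : hd x - hd (x - (xm - x₀)) = hd xm - hd x₀ := by
    rw [hd_sub', hd_sub', sub_sub_cancel]
  rw [h2] at h1
  linarith

theorem sub_le_modOn {n : ℕ} {s : Set (E n)} {f : E n → ℝ}
    (hb : ∃ C, ∀ x ∈ s, |f x| ≤ C) {x y : E n} (hx : x ∈ s) (hy : y ∈ s)
    {t : ℝ} (hd : dist x y ≤ t) : f x - f y ≤ modOn s f t := by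
  obtain ⟨C, hC⟩ := hb
  apply le_trans (le_abs_self _)
  apply le_csSup
  · refine ⟨2*C, ?_⟩
    rintro w ⟨x', hx', y', hy', hdxy, rfl⟩
    have h1 := hC x' hx'
    have h2 := hC y' hy'
    have h3 : |f x' - f y'| ≤ |f x'| + |f y'| := by
      have := abs_add_le (f x') (-(f y'))
      simpa [sub_eq_add_neg] using this
    linarith
  · exact ⟨x, hx, y, hy, hd, rfl⟩

theorem subIn_env {n : ℕ} {ρ ε r K a : ℝ}
    {F : Matrix (Fin (n+1)) (Fin (n+1)) ℝ → ℝ}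
    (hρ1 : ρ < 1) (hε : 0 < ε) (hr : 0 < r) (hrρ : r + Real.sqrt (2*ε*K) ≤ ρ)
    {u f : E n → ℝ} (hu : UpperSemicontinuousOn u (ball (0:E n) 1))
    (hKb : ∀ x ∈ ball (0:E n) 1, |u x| ≤ K)
    (P : ℝ → Prop)
    (hb : ∃ C, ∀ x ∈ ({x : E n | x ∈ ball (0:E n) 1 ∧ P (lst x)}), |f x| ≤ C)
    (hsub : SubIn F (wflat n a) f {x | x ∈ ball (0:E n) 1 ∧ P (lst x)} u) :
    SubIn F (wflat n a)
      (fun x => f x - modOn {x | x ∈ ball (0:E n) 1 ∧ P (lst x)} f (Real.sqrt (2*ε*K)))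
      {x | x ∈ ball (0:E n) r ∧ P (lst x)} (upperEnv ρ ε u) := by
  intro x₀ hx₀ φ δ hδ hφ htouch
  have hrε0 : (0:ℝ) ≤ Real.sqrt (2*ε*K) := Real.sqrt_nonneg _
  have hrρ' : r ≤ ρ := by linarith
  have hx₀r : ‖x₀‖ < r := by
    have := hx₀.1; rwa [mem_ball, dist_zero_right] at this
  obtain ⟨xm, hlxm, hxmρ, hdist, henv, hkey⟩ :=
    env_setup hρ1 hε hrρ hu hKb hx₀r hr
  set v := xm - x₀ with hv
  set c := ‖hd xm - hd x₀‖^2/ε with hc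
  have hxmv : xm - v = x₀ := sub_sub_cancel _ _
  set δ' := min δ (min (r - ‖x₀‖) (ρ - ‖xm‖)) with hδ'
  have hδ'0 : 0 < δ' := lt_min hδ (lt_min (by linarith) (by linarith))
  have hmain : ∀ x ∈ ball xm δ', x ∈ closedBall (0:E n) ρ ∧ (x - v) ∈ ball x₀ δ ∧
      ‖x - v‖ < r ∧ lst (x - v) = lst x := by
    intro x hx
    have hxxm : ‖x - xm‖ < δ' := by rw [mem_ball, dist_eq_norm] at hx; exact hx
    have hd1 : δ' ≤ δ := min_le_left _ _
    have hd2 : δ' ≤ r - ‖x₀‖ := le_trans (min_le_right _ _) (min_le_left _ _)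
    have hd3 : δ' ≤ ρ - ‖xm‖ := le_trans (min_le_right _ _) (min_le_right _ _)
    have hxvx₀ : x - v - x₀ = x - xm := by rw [hv]; abel
    refine ⟨?_, ?_, ?_, ?_⟩
    · rw [mem_closedBall, dist_zero_right]
      have h1 : ‖x‖ ≤ ‖xm‖ + ‖x - xm‖ := by
        have := norm_add_le xm (x - xm); rwa [add_sub_cancel] at this
      linarith
    · rw [mem_ball, dist_eq_norm, hxvx₀]; linarith
    · have h1 : ‖x - v‖ ≤ ‖x₀‖ + ‖x - v - x₀‖ := by
        have := norm_add_le x₀ (x - v - x₀); rwa [add_sub_cancel] at this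
      rw [hxvx₀] at h1; linarith
    · rw [lst_sub', hv, lst_sub', hlxm, sub_self, sub_zero]
  have hxm1 : xm ∈ {x : E n | x ∈ ball (0:E n) 1 ∧ P (lst x)} := by
    refine ⟨?_, ?_⟩
    · rw [mem_ball, dist_zero_right]; linarith
    · rw [hlxm]; exact hx₀.2
  set ψ : E n → ℝ := fun x => φ (x - v) + c with hψ
  have hψc : ContDiffOn ℝ 2 ψ (ball xm δ') := by
    have h1 : ContDiffOn ℝ 2 (fun x : E n => φ (x - v)) (ball xm δ') := by
      apply hφ.comp ((contDiff_id.sub contDiff_const).contDiffOn)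
      intro x hx; exact (hmain x hx).2.1
    exact h1.add contDiffOn_const
  have htch : TouchAbove u ψ {x : E n | x ∈ ball (0:E n) 1 ∧ P (lst x)} xm δ' := by
    constructor
    · show φ (xm - v) + c = u xm
      rw [hxmv, htouch.1, henv]; ring
    · intro x hx
      obtain ⟨hcb, hbx, hnr, hlx⟩ := hmain x hx.1
      have hxv_cb : x - v ∈ closedBall (0:E n) ρ := by
        rw [mem_closedBall, dist_zero_right]; linarith
      have h1 : u x ≤ upperEnv ρ ε u (x - v) + c := hkey x hcb hxv_cb
      have h2 : upperEnv ρ ε u (x - v) ≤ φ (x - v) := by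
        apply htouch.2 (x - v)
        refine ⟨hbx, ?_, ?_⟩
        · rw [mem_ball, dist_zero_right]; exact hnr
        · rw [hlx]; exact hx.2.2
      show u x ≤ φ (x - v) + c
      linarith
  have happ := hsub xm hxm1 ψ δ' hδ'0 hψc htch
  have hhess : hess ψ xm = hess φ x₀ := by
    funext i j
    show iteratedFDeriv ℝ 2 ψ xm _ = iteratedFDeriv ℝ 2 φ x₀ _
    rw [show ψ = fun y => (fun z : E n => φ (z - v)) y + c from rfl]
    rw [iteratedFDeriv_two_add_const (fun z : E n => φ (z - v)) c xm]
    rw [congrFun (iteratedFDeriv_comp_sub'' φ v 2) xm, hxmv]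
  have hw : wflat n a xm = wflat n a x₀ := by
    unfold wflat; rw [hlxm]
  rw [hhess, hw] at happ
  have hmod : f x₀ - f xm ≤ modOn {x : E n | x ∈ ball (0:E n) 1 ∧ P (lst x)} f
      (Real.sqrt (2*ε*K)) := by
    apply sub_le_modOn hb ?_ hxm1 hdist
    exact ⟨by rw [mem_ball, dist_zero_right]; linarith, hx₀.2⟩
  show f x₀ - _ ≤ wflat n a x₀ * F (hess φ x₀)
  linarith

/-- the upper ε-envelope of a viscosity subsolution of the flat
    transmission problem is a viscosity subsolution with slightly worse data. -/
theorem upper_envelope_subsolution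
    (n : ℕ) (hn : 1 ≤ n) (lam Lam : ℝ) (hlam : 0 < lam) (hlL : lam ≤ Lam)
    (Fp Fm : Matrix (Fin (n+1)) (Fin (n+1)) ℝ → ℝ)
    (hFp : UniformlyElliptic lam Lam Fp) (hFm : UniformlyElliptic lam Lam Fm)
    (a : ℝ) (ha0 : 0 < a) (ha1 : a < 1)
    (fp fm g u : E n → ℝ)
    (hfp : UniformContinuousOn fp (BpR n 1)) (hfm : UniformContinuousOn fm (BmR n 1))
    (hfpb : BddOnSet (BpR n 1) fp) (hfmb : BddOnSet (BmR n 1) fm)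
    (hg : UniformContinuousOn g (TR n 1)) (hgb : BddOnSet (TR n 1) g)
    (hu : UpperSemicontinuousOn u (ball (0 : E n) 1))
    (hub : BddOnSet (ball (0 : E n) 1) u)
    (hsub : FlatSub 1 a Fp Fm fp fm g u)
    (ρ : ℝ) (hρ0 : 0 < ρ) (hρ1 : ρ < 1) :
    ∃ ε₀ > (0 : ℝ), ∀ ε : ℝ, 0 < ε → ε ≤ ε₀ →
      ∀ r : ℝ, 0 < r → r ≤ ρ - Real.sqrt (2 * ε * supN (ball (0 : E n) 1) u) →
        FlatSub r a Fp Fm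
          (fun x => fp x -
            modOn (BpR n 1) fp (Real.sqrt (2 * ε * supN (ball (0 : E n) 1) u)))
          (fun x => fm x -
            modOn (BmR n 1) fm (Real.sqrt (2 * ε * supN (ball (0 : E n) 1) u)))
          (fun x => g x -
            modOn (TR n 1) g (Real.sqrt (2 * ε * supN (ball (0 : E n) 1) u)))
          (upperEnv ρ ε u) := by
  obtain ⟨K₀, hK₀⟩ := hub
  have hKb : ∀ x ∈ ball (0:E n) 1, |u x| ≤ supN (ball (0 : E n) 1) u := by
    intro x hx
    have hbdd : BddAbove ((fun x => |u x|) '' ball (0:E n) 1) := by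
      refine ⟨K₀, ?_⟩
      rintro w ⟨z, hz, rfl⟩; exact hK₀ z hz
    exact le_csSup hbdd ⟨x, hx, rfl⟩
  refine ⟨1, one_pos, fun ε hε hε1 r hr hrρ => ?_⟩
  set K := supN (ball (0 : E n) 1) u with hK
  have hrρ2 : r + Real.sqrt (2*ε*K) ≤ ρ := by
    have : Real.sqrt (2 * ε * K) = Real.sqrt (2*ε*K) := by norm_num
    linarith [hrρ, this]
  refine ⟨?_, ?_, ?_⟩
  · exact subIn_env hρ1 hε hr hrρ2 hu hKb (fun t => 0 < t) hfpb hsub.1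
  · exact subIn_env hρ1 hε hr hrρ2 hu hKb (fun t => t < 0) hfmb hsub.2.1
  · intro x₀ hx₀ φp φm δ hδ htt
    have hrε0 : (0:ℝ) ≤ Real.sqrt (2*ε*K) := Real.sqrt_nonneg _
    have hrρ' : r ≤ ρ := by linarith
    have hx₀r : ‖x₀‖ < r := by
      have := hx₀.1; rwa [mem_ball, dist_zero_right] at this
    obtain ⟨xm, hlxm, hxmρ, hdist, henv, hkey⟩ :=
      env_setup hρ1 hε hrρ2 hu hKb hx₀r hr
    set v := xm - x₀ with hv
    set c := ‖hd xm - hd x₀‖^2/ε with hc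
    have hxmv : xm - v = x₀ := sub_sub_cancel _ _
    set δ' := min δ (min (r - ‖x₀‖) (ρ - ‖xm‖)) with hδ'
    have hδ'0 : 0 < δ' := lt_min hδ (lt_min (by linarith) (by linarith))
    have hmain : ∀ x ∈ ball xm δ', x ∈ closedBall (0:E n) ρ ∧ (x - v) ∈ ball x₀ δ ∧
        ‖x - v‖ < r ∧ lst (x - v) = lst x := by
      intro x hx
      have hxxm : ‖x - xm‖ < δ' := by rw [mem_ball, dist_eq_norm] at hx; exact hx
      have hd1 : δ' ≤ δ := min_le_left _ _
      have hd2 : δ' ≤ r - ‖x₀‖ := le_trans (min_le_right _ _) (min_le_left _ _)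
      have hd3 : δ' ≤ ρ - ‖xm‖ := le_trans (min_le_right _ _) (min_le_right _ _)
      have hxvx₀ : x - v - x₀ = x - xm := by rw [hv]; abel
      refine ⟨?_, ?_, ?_, ?_⟩
      · rw [mem_closedBall, dist_zero_right]
        have h1 : ‖x‖ ≤ ‖xm‖ + ‖x - xm‖ := by
          have := norm_add_le xm (x - xm); rwa [add_sub_cancel] at this
        linarith
      · rw [mem_ball, dist_eq_norm, hxvx₀]; linarith
      · have h1 : ‖x - v‖ ≤ ‖x₀‖ + ‖x - v - x₀‖ := by
          have := norm_add_le x₀ (x - v - x₀); rwa [add_sub_cancel] at this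
        rw [hxvx₀] at h1; linarith
      · rw [lst_sub', hv, lst_sub', hlxm, sub_self, sub_zero]
    have hxmT : xm ∈ TR n 1 := by
      refine ⟨?_, ?_⟩
      · rw [mem_ball, dist_zero_right]; linarith
      · rw [hlxm]; exact hx₀.2
    set ψp : E n → ℝ := fun x => φp (x - v) + c with hψp
    set ψm : E n → ℝ := fun x => φm (x - v) + c with hψm
    have hcdiff : ∀ φ : E n → ℝ, ContDiffOn ℝ 1 φ (ball x₀ δ) →
        ContDiffOn ℝ 1 (fun x : E n => φ (x - v) + c) (ball xm δ') := by
      intro φ hφ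
      have h1 : ContDiffOn ℝ 1 (fun x : E n => φ (x - v)) (ball xm δ') := by
        apply hφ.comp ((contDiff_id.sub contDiff_const).contDiffOn)
        intro x hx; exact (hmain x hx).2.1
      exact h1.add contDiffOn_const
    have hsubmem : ∀ x ∈ ball xm δ', x - v ∈ ball (0:E n) r := by
      intro x hx
      rw [mem_ball, dist_zero_right]; exact (hmain x hx).2.2.1
    have htouchgen : ∀ (P : ℝ → Prop) (φ : E n → ℝ),
        (∀ x ∈ ball x₀ δ ∩ ({x : E n | x ∈ ball (0:E n) r ∧ P (lst x)} ∪ TR n r),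
          upperEnv ρ ε u x ≤ φ x) →
        ∀ x ∈ ball xm δ' ∩ ({x : E n | x ∈ ball (0:E n) 1 ∧ P (lst x)} ∪ TR n 1),
          u x ≤ φ (x - v) + c := by
      intro P φ hφt x hx
      obtain ⟨hcb, hbx, hnr, hlx⟩ := hmain x hx.1
      have hxv_cb : x - v ∈ closedBall (0:E n) ρ := by
        rw [mem_closedBall, dist_zero_right]; linarith
      have h1 : u x ≤ upperEnv ρ ε u (x - v) + c := hkey x hcb hxv_cb
      have hmem : x - v ∈ ({x : E n | x ∈ ball (0:E n) r ∧ P (lst x)} ∪ TR n r) := by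
        rcases hx.2 with h | h
        · left
          exact ⟨by rw [mem_ball, dist_zero_right]; exact hnr, by rw [hlx]; exact h.2⟩
        · right
          exact ⟨by rw [mem_ball, dist_zero_right]; exact hnr, by rw [hlx]; exact h.2⟩
      have h2 := hφt (x - v) ⟨hbx, hmem⟩
      linarith
    have htta : TransTestAbove u ψp ψm (BpR n 1) (BmR n 1) (TR n 1) xm δ' := by
      refine ⟨hcdiff φp htt.1, hcdiff φm htt.2.1, ?_, ?_, ?_, ?_⟩
      · intro x hx
        obtain ⟨hcb, hbx, hnr, hlx⟩ := hmain x hx.1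
        have hmem : x - v ∈ ball x₀ δ ∩ TR n r := by
          refine ⟨hbx, ?_, ?_⟩
          · rw [mem_ball, dist_zero_right]; exact hnr
          · rw [hlx]; exact hx.2.2
        show φp (x - v) + c = φm (x - v) + c
        rw [htt.2.2.1 (x - v) hmem]
      · show φp (xm - v) + c = u xm
        rw [hxmv, htt.2.2.2.1, henv]; ring
      · exact htouchgen (fun t => 0 < t) φp htt.2.2.2.2.1
      · exact htouchgen (fun t => t < 0) φm htt.2.2.2.2.2
    have happ := hsub.2.2 xm hxmT ψp ψm δ' hδ'0 htta
    have hfp' : fderiv ℝ ψp xm = fderiv ℝ φp x₀ := by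
      rw [show ψp = fun y => (fun z : E n => φp (z - v)) y + c from rfl]
      rw [fderiv_add_const, fderiv_comp_sub' φp v xm, hxmv]
    have hfm' : fderiv ℝ ψm xm = fderiv ℝ φm x₀ := by
      rw [show ψm = fun y => (fun z : E n => φm (z - v)) y + c from rfl]
      rw [fderiv_add_const, fderiv_comp_sub' φm v xm, hxmv]
    rw [hfp', hfm'] at happ
    have hx₀T : x₀ ∈ TR n 1 := by
      refine ⟨?_, ?_⟩
      · rw [mem_ball, dist_zero_right]; linarith
      · exact hx₀.2
    have hmod : g x₀ - g xm ≤ modOn (TR n 1) g (Real.sqrt (2*ε*K)) :=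
      sub_le_modOn hgb hx₀T hxmT hdist
    show g x₀ - modOn (TR n 1) g (Real.sqrt (2 * ε * K)) ≤
      fderiv ℝ φp x₀ (ed n) - fderiv ℝ φm x₀ (ed n)
    linarith
end
end
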